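/- Let ℓ be a prime, j ≥ 1 an integer, and t, u integers. Then #{0 ≤ a < ℓ^j : a² − t a + u ≡ 0 (mod ℓ^j)} = (1/2)·#{x mod 2ℓ^j·2 : x² ≡ t²−4u (mod 4ℓ^j)}, that is, the number of roots of x² − tx + u modulo ℓ^j equals N_{t²−4u}(ℓ^j) where N_d(m) = #{0 ≤ x < 2m : x² ≡ d (mod 4m)}. -/

import Mathlib

/-- `N_d(m) = #{0 ≤ x < 2m : x² ≡ d (mod 4m)}`. -/
def Ncount (d : ℤ) (m : ℕ) : ℕ :=
  ((Finset.range (2 * m)).filter fun x : ℕ =>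
    ((x : ZMod (4 * m)) ^ 2 = (d : ZMod (4 * m)))).card

/-- The number of roots of `x² − t x + u` modulo `ℓ^j` equals `N_{t²−4u}(ℓ^j)`. -/
theorem card_roots_quadratic_eq_Ncount (ℓ : ℕ) (hℓ : ℓ.Prime) [NeZero ℓ]
    (j : ℕ) (hj : 1 ≤ j) (t u : ℤ) :
    Fintype.card {a : ZMod (ℓ ^ j) //
        a ^ 2 - (t : ZMod (ℓ ^ j)) * a + (u : ZMod (ℓ ^ j)) = 0} =
      Ncount (t ^ 2 - 4 * u) (ℓ ^ j) := by
  set m : ℕ := ℓ ^ j with hmdef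
  have hm0 : 0 < m := pow_pos hℓ.pos j
  haveI : NeZero m := ⟨hm0.ne'⟩
  have hmZ : (0 : ℤ) < (m : ℤ) := by exact_mod_cast hm0
  have h2m : (0 : ℤ) < 2 * (m : ℤ) := by positivity
  set d : ℤ := t ^ 2 - 4 * u with hd
  rw [Fintype.card_subtype]
  unfold Ncount
  have hcastval : ∀ a : ZMod m, (((a.val : ℤ)) : ZMod m) = a := by
    intro a
    rw [Int.cast_natCast, ZMod.natCast_val, ZMod.cast_id]
  -- key translations
  have key1 : ∀ a : ZMod m, (a ^ 2 - (t : ZMod m) * a + (u : ZMod m) = 0) ↔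
      ((m : ℤ) ∣ ((a.val : ℤ) ^ 2 - t * (a.val : ℤ) + u)) := by
    intro a
    rw [← ZMod.intCast_zmod_eq_zero_iff_dvd]
    constructor <;> intro h
    · rw [← h]; push_cast [hcastval a]; ring
    · rw [← h]; push_cast [hcastval a]; ring
  have key2 : ∀ x : ℕ, (((x : ZMod (4 * m)) ^ 2 = (d : ZMod (4 * m)))) ↔
      ((4 * (m : ℤ)) ∣ ((x : ℤ) ^ 2 - d)) := by
    intro x
    rw [← sub_eq_zero]
    have : ((x : ZMod (4 * m)) ^ 2 - (d : ZMod (4 * m)))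
        = ((((x : ℤ) ^ 2 - d : ℤ)) : ZMod (4 * m)) := by push_cast; ring
    rw [this, ZMod.intCast_zmod_eq_zero_iff_dvd]
    norm_cast
  apply Finset.card_bij' (i := fun (a : ZMod m) _ => ((2 * (a.val : ℤ) - t) % (2 * m)).toNat)
    (j := fun (x : ℕ) _ => ((((x : ℤ) + t) / 2 : ℤ) : ZMod m))
  · -- i maps into target
    intro a ha
    simp only [Finset.mem_filter, Finset.mem_univ, true_and] at ha
    obtain ⟨c, hc⟩ := (key1 a).mp ha
    set A : ℤ := (a.val : ℤ) with hA
    set y : ℤ := 2 * A - t with hy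
    have hr0 : 0 ≤ y % (2 * m) := Int.emod_nonneg y (by positivity)
    have hrlt : y % (2 * m) < 2 * m := Int.emod_lt_of_pos y h2m
    rw [Finset.mem_filter, Finset.mem_range]
    constructor
    · omega
    · rw [key2]
      have hcast : (((y % (2 * ↑m)).toNat : ℤ)) = y % (2 * m) :=
        Int.toNat_of_nonneg hr0
      rw [hcast]
      have hdef : y % (2 * m) = y - 2 * m * (y / (2 * m)) := Int.emod_def y (2 * m)
      set k : ℤ := y / (2 * m)
      refine ⟨c - k * y + m * k ^ 2, ?_⟩
      rw [hdef, hd, hy]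
      linear_combination 4 * hc - (4 * (m:ℤ) * k) * hy
  · -- j maps into source
    intro x hx
    simp only [Finset.mem_filter, Finset.mem_range] at hx
    obtain ⟨hxlt, hxsq⟩ := hx
    have hdvd : (4 * (m : ℤ)) ∣ ((x : ℤ) ^ 2 - d) := (key2 x).mp hxsq
    have h2 : (2 : ℤ) ∣ ((x : ℤ) + t) := by
      have h4 : (4 : ℤ) ∣ ((x : ℤ) ^ 2 - d) := dvd_trans ⟨m, rfl⟩ hdvd
      have h2' : (2 : ℤ) ∣ ((x : ℤ) - t) * ((x : ℤ) + t) := by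
        rw [show ((x : ℤ) - t) * ((x : ℤ) + t) = ((x : ℤ) ^ 2 - d) - 4 * u from by
          rw [hd]; ring]
        exact dvd_sub (dvd_trans (by norm_num) h4) ⟨2 * u, by ring⟩
      rcases (Int.prime_two.dvd_mul.mp h2') with h | h
      · obtain ⟨w, hw⟩ := h; exact ⟨w + t, by linarith⟩
      · exact h
    obtain ⟨s, hs⟩ := h2
    have hsval : ((x : ℤ) + t) / 2 = s := by rw [hs]; exact Int.mul_ediv_cancel_left s two_ne_zero
    simp only [Finset.mem_filter, Finset.mem_univ, true_and]
    rw [key1, hsval]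
    have hval : ((((s : ZMod m)).val : ℤ)) = s % m := ZMod.val_intCast s
    rw [hval]
    set q : ℤ := s / m with hqdef
    have hq : s % m = s - m * q := Int.emod_def s m
    obtain ⟨e, he⟩ := hdvd
    have hms : (m : ℤ) ∣ (s ^ 2 - t * s + u) := by
      refine ⟨e, ?_⟩
      have h4s : (4:ℤ) * (s ^ 2 - t * s + u) = 4 * (m * e) := by
        linear_combination he + hd - ((x:ℤ) - t + 2 * s) * hs
      linarith
    obtain ⟨e', he'⟩ := hms
    refine ⟨e' - q * (2 * s - t) + m * q ^ 2, ?_⟩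
    rw [hq]
    linear_combination he'
  · -- left inverse
    intro a ha
    set A : ℤ := (a.val : ℤ) with hA
    set y : ℤ := 2 * A - t with hy
    have hr0 : 0 ≤ y % (2 * m) := Int.emod_nonneg y (by positivity)
    have hcast : (((y % (2 * ↑m)).toNat : ℤ)) = y % (2 * m) := Int.toNat_of_nonneg hr0
    rw [hcast]
    have hdef : y % (2 * m) = y - 2 * m * (y / (2 * m)) := Int.emod_def y (2 * m)
    set k : ℤ := y / (2 * m)
    have hdiv : (y % (2 * m) + t) / 2 = A - m * k := by
      rw [hdef, hy]
      rw [show 2 * A - t - 2 * (m:ℤ) * k + t = 2 * (A - m * k) from by ring]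
      exact Int.mul_ediv_cancel_left _ two_ne_zero
    rw [hdiv]
    push_cast
    rw [ZMod.natCast_self]
    rw [hcastval a |>.symm] -- no-op style; actual:
    push_cast [hcastval a]
    ring_nf
    rw [hA]; exact hcastval a
  · -- right inverse
    intro x hx
    simp only [Finset.mem_filter, Finset.mem_range] at hx
    obtain ⟨hxlt, hxsq⟩ := hx
    have hdvd : (4 * (m : ℤ)) ∣ ((x : ℤ) ^ 2 - d) := (key2 x).mp hxsq
    have h2 : (2 : ℤ) ∣ ((x : ℤ) + t) := by
      have h4 : (4 : ℤ) ∣ ((x : ℤ) ^ 2 - d) := dvd_trans ⟨m, rfl⟩ hdvd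
      have h2' : (2 : ℤ) ∣ ((x : ℤ) - t) * ((x : ℤ) + t) := by
        rw [show ((x : ℤ) - t) * ((x : ℤ) + t) = ((x : ℤ) ^ 2 - d) - 4 * u from by
          rw [hd]; ring]
        exact dvd_sub (dvd_trans (by norm_num) h4) ⟨2 * u, by ring⟩
      rcases (Int.prime_two.dvd_mul.mp h2') with h | h
      · obtain ⟨w, hw⟩ := h; exact ⟨w + t, by linarith⟩
      · exact h
    obtain ⟨s, hs⟩ := h2
    have hsval : ((x : ℤ) + t) / 2 = s := by rw [hs]; exact Int.mul_ediv_cancel_left s two_ne_zero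
    rw [hsval]
    have hval : ((((s : ZMod m)).val : ℤ)) = s % m := ZMod.val_intCast s
    rw [hval]
    set q : ℤ := s / m
    have hq : s % m = s - m * q := Int.emod_def s m
    have hy : 2 * (s % m) - t = (x : ℤ) + 2 * m * (-q) := by
      rw [hq]; linarith [hs]
    rw [hy, Int.add_mul_emod_self_left,
      Int.emod_eq_of_lt (by positivity) (by exact_mod_cast hxlt)]
    simp
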